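/- arXiv:2205.14092 — 4 statements merged into one kernel-verified Lean document; each statement's English description precedes it below -/
import Mathlib

section
/- Let (B_k) be the simple random walk on a finite graph with the starting node chosen uniformly at random among n nodes, and P̃ the tensor transition matrix over an associative unital ℝ-algebra H. Then (1/n)·𝟙_Hᵀ P̃^k, as a row vector in H^n, has i-th component equal to P(B_k = i)·E[φ(δ_1 L)⋯φ(δ_k L) | B_k = i], where δ_q L = f(B_q) − f(B_{q-1}). -/
/-- The degree of a vertex in a finite graph on `Fin n`. -/
def degree (n : ℕ) (Adj : Fin n → Fin n → Prop) [DecidableRel Adj] (i : Fin n) : ℕ :=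
  (Finset.univ.filter (fun j => Adj i j)).card

private lemma walk_key (n d : ℕ) (H : Type*) [Ring H] [Algebra ℝ H]
    (f : Fin n → Fin d → ℝ) (φ : (Fin d → ℝ) → H)
    (Pt : Matrix (Fin n) (Fin n) H) (P : Matrix (Fin n) (Fin n) ℝ)
    (hPt' : ∀ i j, Pt i j = P i j • φ (f j - f i)) :
    ∀ (k : ℕ) (i : Fin n), Matrix.vecMul (fun _ => (1 : H)) (Pt ^ k) i =
      ∑ w : Fin (k+1) → Fin n,
        (if w (Fin.last k) = i then ∏ q : Fin k, P (w q.castSucc) (w q.succ) else 0) •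
          (List.ofFn fun q : Fin k => φ (f (w q.succ) - f (w q.castSucc))).prod := by
  intro k
  induction k with
  | zero =>
    intro i
    rw [pow_zero, Matrix.vecMul_one]
    rw [Fintype.sum_equiv (Equiv.funUnique (Fin 1) (Fin n)) _
      (fun x : Fin n => if x = i then (1:H) else 0)
      (by intro w; simp [Fin.last, ite_smul])]
    simp
  | succ k ih =>
    intro i
    rw [pow_succ, ← Matrix.vecMul_vecMul]
    have hvm : ∀ (v : Fin n → H), Matrix.vecMul v Pt i = ∑ j, v j * Pt j i := by
      intro v; simp [Matrix.vecMul, dotProduct]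
    rw [hvm]
    rw [← Equiv.sum_comp (Fin.snocEquiv (fun _ => Fin n))]
    rw [Fintype.sum_prod_type]
    simp only [Fin.snocEquiv, Equiv.coe_fn_mk]
    simp only [ih, hPt', Finset.sum_mul]
    conv_lhs => rw [Finset.sum_comm]
    conv_rhs => rw [Finset.sum_comm]
    refine Finset.sum_congr rfl fun w _ => ?_
    simp only [Fin.snoc_last, ite_smul, zero_smul, ite_mul, zero_mul]
    rw [Finset.sum_ite_eq, Finset.sum_ite_eq']
    simp only [Finset.mem_univ, if_true]
    rw [Fin.prod_univ_castSucc, List.ofFn_succ', List.prod_concat]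
    simp only [Fin.snoc_castSucc, Fin.succ_castSucc, Fin.snoc_last, Fin.succ_last,
      Function.comp]
    rw [smul_mul_smul_comm]

/-- Forward hypo-elliptic diffusion: for the simple random walk started uniformly at
random among the `n` nodes, the `i`-th component of the row vector `(1/n)·𝟙_Hᵀ P̃^k`
equals `P(B_k = i)·E[φ(δ₁L)⋯φ(δ_kL) | B_k = i]`, i.e. the sum over all length-`k`
trajectories ending at `i` of their joint probability (including the uniform `1/n`
initial factor) times the ordered `H`-product of the lifted increments. -/
theorem forward_hypoelliptic_diffusion (n d k : ℕ) (hn : 0 < n) (hk : 1 ≤ k)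
    (H : Type*) [Ring H] [Algebra ℝ H]
    (Adj : Fin n → Fin n → Prop) [DecidableRel Adj] (hsymm : Symmetric Adj)
    (hdeg : ∀ i, 0 < degree n Adj i)
    (f : Fin n → Fin d → ℝ) (φ : (Fin d → ℝ) → H)
    (Pt : Matrix (Fin n) (Fin n) H)
    (hPt : ∀ i j, Pt i j =
      if Adj i j then ((degree n Adj i : ℝ))⁻¹ • φ (f j - f i) else 0)
    (P : Matrix (Fin n) (Fin n) ℝ)
    (hP : ∀ i j, P i j = if Adj i j then ((degree n Adj i : ℝ))⁻¹ else 0)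
    (i : Fin n) :
    ((n : ℝ))⁻¹ • Matrix.vecMul (fun _ => (1 : H)) (Pt ^ k) i =
      ∑ w : Fin (k+1) → Fin n,
        (if w (Fin.last k) = i then
          ((n : ℝ))⁻¹ * ∏ q : Fin k, P (w q.castSucc) (w q.succ) else 0) •
          (List.ofFn fun q : Fin k =>
            φ (f (w q.succ) - f (w q.castSucc))).prod := by
  have hPt' : ∀ i j, Pt i j = P i j • φ (f j - f i) := by
    intro a b
    rw [hPt, hP]
    split_ifs with h
    · rfl
    · simp
  rw [walk_key n d H f φ Pt P hPt' k i, Finset.smul_sum]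
  refine Finset.sum_congr rfl fun w _ => ?_
  split_ifs with h
  · rw [mul_smul]
  · simp
end

section
/- Fix M ≥ 1, vectors u_1,…,u_M ∈ ℝ^d, and set ℓ_m = u_{M-m+1} ⊗ ⋯ ⊗ u_M ∈ (ℝ^d)^{⊗m} for 1 ≤ m ≤ M and ℓ_0 = 1. Let Φ̂_k(i) = E[exp_⊗(δ_1 L)⋯exp_⊗(δ_k L) | B_0 = i] ∈ H for the simple random walk on a finite graph with node attributes f : V → ℝ^d. Define f_{k,m} ∈ ℝ^n by f_{1,m} = (1/m!)(P ⊙ C^{u_{M-m+1}} ⊙ ⋯ ⊙ C^{u_M})·𝟙 and, for k ≥ 2, f_{k,m} = P·f_{k-1,m} + Σ_{r=1}^m (1/r!)(P ⊙ C^{u_{M-m+1}} ⊙ ⋯ ⊙ C^{u_{M-m+r}})·f_{k-1,m-r} with f_{k,0} = 𝟙. Then f_{k,m}(i) = ⟨ℓ_m, Φ̂_k(i)⟩ for all nodes i, all k ≥ 1, and all 1 ≤ m ≤ M, where ⟨ℓ_m, ·⟩ pairs with the degree-m tensor component. -/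
/-- Coordinate model of the `m`-th tensor power `(ℝ^d)^{⊗m}`. -/
abbrev Tens (d m : ℕ) := (Fin m → Fin d) → ℝ

/-- The graded space `H = ∏_{m ≥ 0} (ℝ^d)^{⊗m}`. -/
abbrev GradedSeq (d : ℕ) := ∀ m : ℕ, Tens d m

/-- The graded (Cauchy) product on `H`: `(u·v)_m = Σ_{i=0}^m u_i ⊗ v_{m-i}`. -/
noncomputable def cauchyMul {d : ℕ} (u v : GradedSeq d) : GradedSeq d :=
  fun m f => ∑ i : Fin (m+1),
    u i.val (fun p => f ⟨p.val, lt_of_lt_of_le p.isLt (Nat.lt_succ_iff.mp i.isLt)⟩) *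
    v (m - i.val) (fun p => f ⟨i.val + p.val, by
      have h1 := p.isLt; have h2 := i.isLt; omega⟩)

/-- The unit `1_H = (1, 0, 0, …)` of the graded algebra. -/
def oneSeq (d : ℕ) : GradedSeq d := fun m _ => if m = 0 then 1 else 0

/-- Ordered product of a list of elements of `H`. -/
noncomputable def prodSeq {d : ℕ} (l : List (GradedSeq d)) : GradedSeq d :=
  l.foldr cauchyMul (oneSeq d)

/-- The tensor exponential `exp_⊗(x) = (x^{⊗m}/m!)_{m ≥ 0}` in coordinates. -/
noncomputable def texp {d : ℕ} (x : Fin d → ℝ) : GradedSeq d :=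
  fun m f => ((m.factorial : ℝ))⁻¹ * ∏ p : Fin m, x (f p)

/-- The inner product on `(ℝ^d)^{⊗m}` making the standard coordinate tensors an
orthonormal basis. -/
noncomputable def tinner {d : ℕ} (m : ℕ) (a b : Tens d m) : ℝ :=
  ∑ f : Fin m → Fin d, a f * b f

/-- `Φ̂_k(i) = E[exp_⊗(δ₁L)⋯exp_⊗(δ_kL) | B₀ = i] ∈ H`: the probability-weighted sum,
over all length-`k` trajectories of the random walk with transition matrix `P` started
at `i`, of the ordered graded product of the tensor exponentials of the attribute
increments. -/
noncomputable def PhiHat {n d : ℕ} (fattr : Fin n → Fin d → ℝ)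
    (P : Matrix (Fin n) (Fin n) ℝ) (k : ℕ) (i : Fin n) : GradedSeq d :=
  ∑ w : Fin (k+1) → Fin n,
    if w 0 = i then
      (∏ q : Fin k, P (w q.castSucc) (w q.succ)) •
        prodSeq (List.ofFn fun q : Fin k =>
          texp (fun b => fattr (w q.succ) b - fattr (w q.castSucc) b))
    else 0


/-- the factored covector `a_c ⊗ a_{c+1} ⊗ ⋯ ⊗ a_{c+m-1}` -/
noncomputable def ellT (d : ℕ) (a : ℕ → Fin d → ℝ) (c m : ℕ) : Tens d m :=
  fun f => ∏ p : Fin m, a (c + p.val) (f p)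

lemma sum_split (d i j : ℕ) (A : Tens d i) (B : Tens d j) :
    ∑ f : Fin (i+j) → Fin d, A (fun p => f (Fin.castAdd j p)) * B (fun p => f (Fin.natAdd i p))
      = (∑ g : Fin i → Fin d, A g) * (∑ h : Fin j → Fin d, B h) := by
  rw [Finset.sum_mul_sum]
  rw [← Finset.sum_product']
  apply Fintype.sum_equiv ((Equiv.arrowCongr finSumFinEquiv.symm (Equiv.refl (Fin d))).trans
    (Equiv.sumArrowEquivProdArrow _ _ _))
  intro f
  simp [Equiv.sumArrowEquivProdArrow, Equiv.arrowCongr, Function.comp_def]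

lemma key_split (d : ℕ) (a : ℕ → Fin d → ℝ) (c i j : ℕ) (A : Tens d i) (B : Tens d j) :
    ∑ f : Fin (i+j) → Fin d, (∏ p : Fin (i+j), a (c + p.val) (f p)) *
        (A (fun p => f (Fin.castAdd j p)) * B (fun p => f (Fin.natAdd i p)))
      = tinner i (ellT d a c i) A * tinner j (ellT d a (c+i) j) B := by
  rw [tinner, tinner, ← sum_split d i j (fun g => ellT d a c i g * A g)
    (fun h => ellT d a (c+i) j h * B h)]
  apply Finset.sum_congr rfl
  intro f _
  rw [Fin.prod_univ_add (fun p => a (c + p.val) (f p))]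
  simp only [ellT, Fin.coe_castAdd, Fin.coe_natAdd, ← add_assoc]
  ring

lemma tinner_cauchy (d : ℕ) (a : ℕ → Fin d → ℝ) (c m : ℕ) (A B : GradedSeq d) :
    tinner m (ellT d a c m) (cauchyMul A B m) =
      ∑ r : Fin (m+1), tinner r.val (ellT d a c r.val) (A r.val) *
        tinner (m - r.val) (ellT d a (c + r.val) (m - r.val)) (B (m - r.val)) := by
  conv_lhs => rw [tinner]
  simp only [cauchyMul, Finset.mul_sum]
  rw [Finset.sum_comm]
  apply Finset.sum_congr rfl
  intro r _
  have hr : r.val ≤ m := Nat.lt_succ_iff.mp r.isLt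
  have h : r.val + (m - r.val) = m := by omega
  rw [← key_split d a c r.val (m - r.val) (A r.val) (B (m - r.val))]
  apply Fintype.sum_equiv (Equiv.arrowCongr (finCongr h.symm) (Equiv.refl (Fin d)))
  intro x
  have he : ∀ z : Fin (r.val + (m - r.val)),
      (Equiv.arrowCongr (finCongr h.symm) (Equiv.refl (Fin d))) x z = x ⟨z.val, by omega⟩ := by
    intro z; simp [Equiv.arrowCongr, finCongr, Fin.cast]
  simp only [he]
  congr 1
  · exact Fintype.prod_equiv (finCongr h.symm) _ _ (fun p => rfl)

lemma cauchyMul_smul_right {d : ℕ} (u : GradedSeq d) (c : ℝ) (v : GradedSeq d) :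
    cauchyMul u (c • v) = c • cauchyMul u v := by
  funext m f
  simp only [cauchyMul, Pi.smul_apply, smul_eq_mul, Finset.mul_sum]
  apply Finset.sum_congr rfl
  intro r _
  ring

lemma cauchyMul_sum_right {d : ℕ} {ι : Type*} (u : GradedSeq d) (s : Finset ι)
    (v : ι → GradedSeq d) :
    cauchyMul u (∑ x ∈ s, v x) = ∑ x ∈ s, cauchyMul u (v x) := by
  funext m f
  simp only [cauchyMul, Finset.sum_apply, Finset.mul_sum]
  rw [Finset.sum_comm]

lemma cauchyMul_zero_right {d : ℕ} (u : GradedSeq d) : cauchyMul u 0 = 0 := by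
  funext m f
  simp [cauchyMul]

lemma prodSeq_cons {d : ℕ} (x : GradedSeq d) (l : List (GradedSeq d)) :
    prodSeq (x :: l) = cauchyMul x (prodSeq l) := rfl

lemma PhiHat_succ {n d : ℕ} (fattr : Fin n → Fin d → ℝ) (P : Matrix (Fin n) (Fin n) ℝ)
    (k : ℕ) (i : Fin n) :
    PhiHat fattr P (k+1) i =
      ∑ j, P i j • cauchyMul (texp (fun b => fattr j b - fattr i b)) (PhiHat fattr P k j) := by
  have hexp : ∀ j : Fin n,
      P i j • cauchyMul (texp (fun b => fattr j b - fattr i b)) (PhiHat fattr P k j)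
      = ∑ w' : Fin (k+1) → Fin n, (if w' 0 = j then
          P i j • cauchyMul (texp (fun b => fattr j b - fattr i b))
            ((∏ q : Fin k, P (w' q.castSucc) (w' q.succ)) •
              prodSeq (List.ofFn fun q : Fin k =>
                texp (fun b => fattr (w' q.succ) b - fattr (w' q.castSucc) b)))
        else 0) := by
    intro j
    rw [PhiHat, cauchyMul_sum_right, Finset.smul_sum]
    refine Finset.sum_congr rfl fun w' _ => ?_
    by_cases h : w' 0 = j
    · simp [h]
    · simp [h, cauchyMul_zero_right]
  simp only [hexp]
  rw [Finset.sum_comm]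
  rw [PhiHat]
  rw [← Equiv.sum_comp (Fin.consEquiv (fun _ : Fin (k+2) => Fin n))]
  rw [Fintype.sum_prod_type]
  have hc : ∀ (a : Fin n) (w' : Fin (k+1) → Fin n),
      (Fin.consEquiv (fun _ : Fin (k+2) => Fin n)) (a, w') = Fin.cons a w' := fun _ _ => rfl
  simp only [hc, Fin.cons_zero]
  rw [Finset.sum_comm]
  refine Finset.sum_congr rfl fun w' _ => ?_
  rw [Finset.sum_ite_eq', if_pos (Finset.mem_univ i)]
  rw [Fin.prod_univ_succ, List.ofFn_succ, prodSeq_cons]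
  simp only [Fin.castSucc_zero, Fin.cons_zero, ← Fin.succ_castSucc, Fin.cons_succ]
  rw [Finset.sum_ite_eq, if_pos (Finset.mem_univ _)]
  rw [cauchyMul_smul_right, smul_smul]
lemma PhiHat_zero {n d : ℕ} (fattr : Fin n → Fin d → ℝ) (P : Matrix (Fin n) (Fin n) ℝ)
    (j : Fin n) : PhiHat fattr P 0 j = oneSeq d := by
  rw [PhiHat]
  have key : ∀ w : Fin (0+1) → Fin n,
      (if w 0 = j then
        (∏ q : Fin 0, P (w q.castSucc) (w q.succ)) •
          prodSeq (List.ofFn fun q : Fin 0 =>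
            texp (fun b => fattr (w q.succ) b - fattr (w q.castSucc) b))
      else 0) = if w = (fun _ => j) then oneSeq d else 0 := by
    intro w
    have hw : (w 0 = j) ↔ w = fun _ => j := by
      constructor
      · intro h; funext p; rw [show p = 0 from Fin.ext (by omega), h]
      · intro h; rw [h]
    simp [hw, prodSeq, List.ofFn_zero]
  rw [Finset.sum_congr rfl (fun w _ => key w)]
  simp

lemma tinner_ell_texp (d : ℕ) (a : ℕ → Fin d → ℝ) (c r : ℕ) (x : Fin d → ℝ) :
    tinner r (ellT d a c r) (texp x r) =
      ((r.factorial : ℝ))⁻¹ * ∏ p ∈ Finset.range r, ∑ b, a (c + p) b * x b := by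
  rw [tinner]
  simp only [ellT, texp]
  have h1 : ∀ f : Fin r → Fin d,
      (∏ p : Fin r, a (c + p.val) (f p)) * (((r.factorial : ℝ))⁻¹ * ∏ p : Fin r, x (f p))
      = ((r.factorial : ℝ))⁻¹ * ∏ p : Fin r, (a (c + p.val) (f p) * x (f p)) := by
    intro f; rw [Finset.prod_mul_distrib]; ring
  rw [Finset.sum_congr rfl fun f _ => h1 f, ← Finset.mul_sum]
  congr 1
  rw [← Fin.prod_univ_eq_prod_range (fun p => ∑ b, a (c + p) b * x b) r]
  rw [Finset.prod_univ_sum]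
  rw [Fintype.piFinset_univ]

lemma tinner_oneSeq (d : ℕ) (a : ℕ → Fin d → ℝ) (c m : ℕ) :
    tinner m (ellT d a c m) (oneSeq d m) = if m = 0 then 1 else 0 := by
  cases m with
  | zero => simp [tinner, oneSeq, ellT]
  | succ m => simp [tinner, oneSeq]

lemma PhiHat_deg0 {n d : ℕ} (fattr : Fin n → Fin d → ℝ) (P : Matrix (Fin n) (Fin n) ℝ)
    (hst : ∀ i, ∑ j, P i j = 1) :
    ∀ (k : ℕ) (i : Fin n) (f : Fin 0 → Fin d), PhiHat fattr P k i 0 f = 1 := by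
  intro k
  induction k with
  | zero => intro i f; simp [PhiHat_zero, oneSeq]
  | succ k ih =>
    intro i f
    rw [PhiHat_succ]
    simp only [Finset.sum_apply, Pi.smul_apply, smul_eq_mul, cauchyMul]
    simp [texp, ih]
    exact hst i

lemma tinner_ell_PhiHat_deg0 {n d : ℕ} (fattr : Fin n → Fin d → ℝ)
    (P : Matrix (Fin n) (Fin n) ℝ) (hst : ∀ i, ∑ j, P i j = 1)
    (a : ℕ → Fin d → ℝ) (c k : ℕ) (i : Fin n) :
    tinner 0 (ellT d a c 0) (PhiHat fattr P k i 0) = 1 := by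
  simp [tinner, ellT, PhiHat_deg0 fattr P hst k i]

lemma tinner_ell_PhiHat_deg0' {n d : ℕ} (fattr : Fin n → Fin d → ℝ)
    (P : Matrix (Fin n) (Fin n) ℝ) (hst : ∀ i, ∑ j, P i j = 1)
    (a : ℕ → Fin d → ℝ) (c k : ℕ) (i : Fin n) (m : ℕ) (hm : m = 0) :
    tinner m (ellT d a c m) (PhiHat fattr P k i m) = 1 := by
  subst hm; exact tinner_ell_PhiHat_deg0 fattr P hst a c k i

lemma tinner_apply_sum {d m : ℕ} {ι : Type*} (s : Finset ι) (a : Tens d m) (c : ι → ℝ)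
    (v : ι → GradedSeq d) :
    tinner m a ((∑ x ∈ s, c x • v x) m) = ∑ x ∈ s, c x * tinner m a (v x m) := by
  simp only [tinner, Finset.sum_apply, Pi.smul_apply, smul_eq_mul, Finset.mul_sum]
  rw [Finset.sum_comm]
  exact Finset.sum_congr rfl fun x _ => Finset.sum_congr rfl fun f _ => by ring

lemma G_rec {n d : ℕ} (M : ℕ) (fattr : Fin n → Fin d → ℝ) (u : ℕ → Fin d → ℝ)
    (P : Matrix (Fin n) (Fin n) ℝ) (C : ℕ → Matrix (Fin n) (Fin n) ℝ)
    (hCP : ∀ i j, P i j ≠ 0 → ∀ a, C a i j = ∑ b, u a b * (fattr j b - fattr i b))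
    (k m : ℕ) (hm1 : 1 ≤ m) (hmM : m ≤ M) (i : Fin n) :
    tinner m (ellT d u (M - m + 1) m) (PhiHat fattr P (k+1) i m) =
      (∑ j, P i j * tinner m (ellT d u (M - m + 1) m) (PhiHat fattr P k j m)) +
        ∑ r ∈ Finset.Icc 1 m, ((r.factorial : ℝ))⁻¹ *
          ∑ j, (P i j * ∏ p ∈ Finset.range r, C (M - m + 1 + p) i j) *
            tinner (m - r) (ellT d u (M - (m - r) + 1) (m - r)) (PhiHat fattr P k j (m - r)) := by
  have hsplit : Finset.range (m+1) = insert 0 (Finset.Icc 1 m) := by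
    ext x; simp; omega
  rw [PhiHat_succ, tinner_apply_sum]
  have step1 : ∀ j : Fin n,
      tinner m (ellT d u (M - m + 1) m)
        (cauchyMul (texp (fun b => fattr j b - fattr i b)) (PhiHat fattr P k j) m)
      = tinner m (ellT d u (M - m + 1) m) (PhiHat fattr P k j m)
        + ∑ r ∈ Finset.Icc 1 m,
            (((r.factorial : ℝ))⁻¹ *
              ∏ p ∈ Finset.range r, ∑ b, u (M - m + 1 + p) b * (fattr j b - fattr i b)) *
            tinner (m - r) (ellT d u (M - (m - r) + 1) (m - r)) (PhiHat fattr P k j (m - r)) := by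
    intro j
    rw [tinner_cauchy]
    rw [Fin.sum_univ_eq_sum_range (fun r =>
      tinner r (ellT d u (M - m + 1) r) (texp (fun b => fattr j b - fattr i b) r) *
      tinner (m - r) (ellT d u (M - m + 1 + r) (m - r)) (PhiHat fattr P k j (m - r)))]
    rw [hsplit, Finset.sum_insert (by simp)]
    congr 1
    · rw [tinner_ell_texp]
      simp
    · refine Finset.sum_congr rfl fun r hr => ?_
      rw [tinner_ell_texp]
      have h1 : M - m + 1 + r = M - (m - r) + 1 := by
        simp only [Finset.mem_Icc] at hr; omega
      rw [h1]
  rw [Finset.sum_congr rfl fun j _ => congrArg (P i j * ·) (step1 j)]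
  simp only [mul_add]
  rw [Finset.sum_add_distrib]
  congr 1
  simp only [Finset.mul_sum]
  rw [Finset.sum_comm]
  refine Finset.sum_congr rfl fun r hr => ?_
  refine Finset.sum_congr rfl fun j _ => ?_
  by_cases hp : P i j = 0
  · simp [hp]
  · have hC : ∏ p ∈ Finset.range r, ∑ b, u (M - m + 1 + p) b * (fattr j b - fattr i b)
        = ∏ p ∈ Finset.range r, C (M - m + 1 + p) i j :=
      Finset.prod_congr rfl fun p _ => (hCP i j hp _).symm
    rw [hC]
    ring

/-- Low-rank recursion (Theorem 3 of the paper): with `ℓ_m = u_{M-m+1} ⊗ ⋯ ⊗ u_M`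
(1-indexed `u`), `C^a_{i,j} = ⟨u_a, f j − f i⟩` for `i ~ j` (else 0), and `f_{k,m}`
defined by the stated recursion in terms of entrywise products of `P` with the `C`
matrices, one has `f_{k,m}(i) = ⟨ℓ_m, Φ̂_k(i)⟩` for all nodes `i`, walk lengths
`k ≥ 1`, and degrees `1 ≤ m ≤ M`. -/
theorem low_rank_recursion (n d M : ℕ) (hM : 1 ≤ M)
    (Adj : Fin n → Fin n → Prop) [DecidableRel Adj] (hsymm : Symmetric Adj)
    (hdeg : ∀ i, 0 < degree n Adj i)
    (fattr : Fin n → Fin d → ℝ) (u : ℕ → Fin d → ℝ)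
    (P : Matrix (Fin n) (Fin n) ℝ)
    (hP : ∀ i j, P i j = if Adj i j then ((degree n Adj i : ℝ))⁻¹ else 0)
    (C : ℕ → Matrix (Fin n) (Fin n) ℝ)
    (hC : ∀ a i j, C a i j =
      if Adj i j then ∑ b, u a b * (fattr j b - fattr i b) else 0)
    (Fk : ℕ → ℕ → Fin n → ℝ)
    (hF0 : ∀ k i, Fk k 0 i = 1)
    (hF1 : ∀ m, 1 ≤ m → m ≤ M → ∀ i, Fk 1 m i =
      ((m.factorial : ℝ))⁻¹ *
        ∑ j, P i j * ∏ p ∈ Finset.range m, C (M - m + 1 + p) i j)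
    (hFk : ∀ k, 2 ≤ k → ∀ m, 1 ≤ m → m ≤ M → ∀ i, Fk k m i =
      (∑ j, P i j * Fk (k-1) m j) +
        ∑ r ∈ Finset.Icc 1 m, ((r.factorial : ℝ))⁻¹ *
          ∑ j, (P i j * ∏ p ∈ Finset.range r, C (M - m + 1 + p) i j) *
            Fk (k-1) (m - r) j) :
    ∀ k, 1 ≤ k → ∀ m, 1 ≤ m → m ≤ M → ∀ i,
      Fk k m i =
        tinner m (fun fidx => ∏ p : Fin m, u (M - m + 1 + p.val) (fidx p))
          (PhiHat fattr P k i m) := by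
  have hst : ∀ i, ∑ j, P i j = 1 := by
    intro i
    simp only [hP]
    rw [← Finset.sum_filter, Finset.sum_const, nsmul_eq_mul]
    exact mul_inv_cancel₀ (Nat.cast_ne_zero.mpr (hdeg i).ne')
  have hCP : ∀ i j, P i j ≠ 0 → ∀ a, C a i j = ∑ b, u a b * (fattr j b - fattr i b) := by
    intro i j hpij a
    rw [hC]
    rw [if_pos]
    by_contra hadj
    exact hpij (by rw [hP, if_neg hadj])
  have hell : ∀ m : ℕ,
      (fun fidx => ∏ p : Fin m, u (M - m + 1 + p.val) (fidx p)) = ellT d u (M - m + 1) m :=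
    fun m => rfl
  intro k hk
  induction k, hk using Nat.le_induction with
  | base =>
    intro m hm1 hmM i
    rw [hF1 m hm1 hmM i, hell]
    have hgr := G_rec M fattr u P C hCP 0 m hm1 hmM i
    simp only [zero_add] at hgr
    rw [hgr]
    have hz : ∀ j, tinner m (ellT d u (M - m + 1) m) (PhiHat fattr P 0 j m) = 0 := by
      intro j; rw [PhiHat_zero, tinner_oneSeq, if_neg (by omega)]
    simp only [hz, mul_zero, Finset.sum_const_zero, zero_add]
    rw [Finset.sum_eq_single m]
    · refine congrArg (fun s => ((m.factorial : ℝ))⁻¹ * s) (Finset.sum_congr rfl fun x _ => ?_)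
      rw [tinner_ell_PhiHat_deg0' fattr P hst u _ 0 x (m - m) (Nat.sub_self m), mul_one]
    · intro r hr hne
      have hmr : 1 ≤ m - r := by
        simp only [Finset.mem_Icc] at hr; omega
      have hz2 : ∀ j, tinner (m - r) (ellT d u (M - (m - r) + 1) (m - r))
          (PhiHat fattr P 0 j (m - r)) = 0 := by
        intro j; rw [PhiHat_zero, tinner_oneSeq, if_neg (by omega)]
      simp [hz2]
    · intro hmem
      exact absurd (Finset.mem_Icc.mpr ⟨hm1, le_refl m⟩) hmem
  | succ k hk ih =>
    intro m hm1 hmM i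
    rw [hFk (k+1) (by omega) m hm1 hmM i]
    simp only [Nat.add_sub_cancel]
    rw [hell, G_rec M fattr u P C hCP k m hm1 hmM i]
    congr 1
    · exact Finset.sum_congr rfl fun j _ => by rw [ih m hm1 hmM j, hell]
    · refine Finset.sum_congr rfl fun r hr => ?_
      congr 1
      refine Finset.sum_congr rfl fun j _ => ?_
      congr 1
      rcases Nat.lt_or_ge r m with h | h
      · rw [ih (m - r) (by omega) (by omega) j, hell]
      · have h0 : m - r = 0 := by
          simp only [Finset.mem_Icc] at hr; omega
        rw [h0, hF0]
        exact (tinner_ell_PhiHat_deg0 fattr P hst u _ k j).symm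
end

section
/- With notation as in the low-rank recursion, including the starting node attribute: letting Φ_k(i) = exp_⊗(f(i))·Φ̂_k(i) (product in the algebra H), ℓ_M = u_1 ⊗ ⋯ ⊗ u_M, and F^u_i = ⟨u, f(i)⟩, one has ⟨ℓ_M, Φ_k(i)⟩ = Σ_{r=0}^M (1/r!)·F^{u_1}_i ⋯ F^{u_r}_i · f_{k,M-r}(i), where f_{k,m}(i) = ⟨u_{M-m+1} ⊗ ⋯ ⊗ u_M, Φ̂_k(i)⟩ and the empty product for r = 0 is 1. -/
set_option maxHeartbeats 1000000

lemma sum_append_split {d r s : ℕ} (F : (Fin (r+s) → Fin d) → ℝ) :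
    ∑ f : Fin (r+s) → Fin d, F f =
      ∑ g : Fin r → Fin d, ∑ h : Fin s → Fin d, F (Fin.append g h) := by
  have h1 := Fintype.sum_equiv (Fin.appendEquiv r s)
    (fun p : (Fin r → Fin d) × (Fin s → Fin d) => F (Fin.append p.1 p.2)) F (fun p => rfl)
  rw [← h1, Fintype.sum_prod_type]

lemma key (d M r s : ℕ) (hM : M = r + s) (x : Fin d → ℝ) (u : ℕ → Fin d → ℝ)
    (b : Tens d s) :
    ∑ f : Fin M → Fin d, (∏ p : Fin M, u (1 + p.val) (f p)) *
      (((r.factorial : ℝ))⁻¹ * (∏ p : Fin r, x (f ⟨p.val, by omega⟩)) *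
        b (fun p => f ⟨r + p.val, by have := p.isLt; omega⟩)) =
    ((r.factorial : ℝ))⁻¹ * (∏ p ∈ Finset.range r, ∑ c, u (p + 1) c * x c) *
      ∑ g : Fin s → Fin d, (∏ p : Fin s, u (r + 1 + p.val) (g p)) * b g := by
  subst hM
  rw [sum_append_split]
  have hidx1 : ∀ (g : Fin r → Fin d) (h : Fin s → Fin d) (p : Fin r),
      Fin.append g h ⟨p.val, by omega⟩ = g p := by
    intro g h p
    have e : (⟨p.val, by omega⟩ : Fin (r+s)) = Fin.castAdd s p := rfl
    rw [e, Fin.append_left]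
  have hidx2 : ∀ (g : Fin r → Fin d) (h : Fin s → Fin d) (p : Fin s),
      Fin.append g h ⟨r + p.val, by have := p.isLt; omega⟩ = h p := by
    intro g h p
    have e : (⟨r + p.val, by have := p.isLt; omega⟩ : Fin (r+s)) = Fin.natAdd r p := rfl
    rw [e, Fin.append_right]
  calc ∑ g : Fin r → Fin d, ∑ h : Fin s → Fin d,
        ((∏ p : Fin (r+s), u (1 + p.val) (Fin.append g h p)) *
        (((r.factorial : ℝ))⁻¹ * (∏ p : Fin r, x (Fin.append g h ⟨p.val, by omega⟩)) *
          b (fun p => Fin.append g h ⟨r + p.val, by have := p.isLt; omega⟩)))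
      = ∑ g : Fin r → Fin d, ∑ h : Fin s → Fin d,
        ((∏ p : Fin r, u (1 + p.val) (g p) * x (g p)) * (((r.factorial : ℝ))⁻¹ *
          ((∏ p : Fin s, u (r + 1 + p.val) (h p)) * b h))) := by
        refine Finset.sum_congr rfl fun g _ => Finset.sum_congr rfl fun h _ => ?_
        have e1 : (∏ p : Fin (r+s), u (1 + p.val) (Fin.append g h p)) =
            (∏ p : Fin r, u (1 + p.val) (g p)) * ∏ p : Fin s, u (r + 1 + p.val) (h p) := by
          rw [Fin.prod_univ_add]
          congr 1
          · refine Finset.prod_congr rfl fun p _ => ?_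
            rw [Fin.append_left]
            rfl
          · refine Finset.prod_congr rfl fun p _ => ?_
            rw [Fin.append_right]
            congr 1
            show 1 + (r + p.val) = r + 1 + p.val
            omega
        have e3 : (fun p => Fin.append g h ⟨r + p.val, by have := p.isLt; omega⟩) = h := by
          funext p; exact hidx2 g h p
        have e2 : (∏ p : Fin r, x (Fin.append g h ⟨p.val, by omega⟩)) =
            ∏ p : Fin r, x (g p) :=
          Finset.prod_congr rfl fun p _ => congrArg x (hidx1 g h p)
        rw [e1, e2, e3, Finset.prod_mul_distrib]
        ring
    _ = ((r.factorial : ℝ))⁻¹ * (∏ p ∈ Finset.range r, ∑ c, u (p + 1) c * x c) *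
        ∑ h : Fin s → Fin d, (∏ p : Fin s, u (r + 1 + p.val) (h p)) * b h := by
        simp only [← Finset.mul_sum]
        rw [← Finset.sum_mul]
        have hA : (∑ g : Fin r → Fin d, ∏ p : Fin r, (u (1 + p.val) (g p) * x (g p))) =
            ∏ p ∈ Finset.range r, ∑ c, u (p + 1) c * x c := by
          rw [(Fintype.prod_sum (fun (p : Fin r) (c : Fin d) => u (1 + p.val) c * x c)).symm]
          rw [← Fin.prod_univ_eq_prod_range (fun j => ∑ c, u (j + 1) c * x c) r]
          exact Finset.prod_congr rfl fun p _ => by rw [add_comm 1 p.val]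
        rw [hA]
        ring

/-- Adding the starting node attribute: with `Φ_k(i) = exp_⊗(f i)·Φ̂_k(i)`,
`ℓ_M = u₁ ⊗ ⋯ ⊗ u_M` (1-indexed `u`) and `F^{u_a}_i = ⟨u_a, f i⟩`, one has
`⟨ℓ_M, Φ_k(i)⟩ = Σ_{r=0}^M (1/r!)·F^{u₁}_i ⋯ F^{u_r}_i · f_{k,M-r}(i)`,
where `f_{k,m}(i) = ⟨u_{M-m+1} ⊗ ⋯ ⊗ u_M, Φ̂_k(i)⟩` and the empty product is 1. -/
theorem low_rank_zero_start (n d M k : ℕ) (hM : 1 ≤ M) (hk : 1 ≤ k)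
    (Adj : Fin n → Fin n → Prop) [DecidableRel Adj] (hsymm : Symmetric Adj)
    (hdeg : ∀ i, 0 < degree n Adj i)
    (fattr : Fin n → Fin d → ℝ) (u : ℕ → Fin d → ℝ)
    (P : Matrix (Fin n) (Fin n) ℝ)
    (hP : ∀ i j, P i j = if Adj i j then ((degree n Adj i : ℝ))⁻¹ else 0)
    (i : Fin n) :
    tinner M (fun fidx => ∏ p : Fin M, u (1 + p.val) (fidx p))
        ((cauchyMul (texp (fattr i)) (PhiHat fattr P k i)) M) =
      ∑ r ∈ Finset.range (M+1), ((r.factorial : ℝ))⁻¹ *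
        (∏ p ∈ Finset.range r, ∑ b, u (p + 1) b * fattr i b) *
        tinner (M - r)
          (fun fidx => ∏ p : Fin (M - r), u (M - (M - r) + 1 + p.val) (fidx p))
          (PhiHat fattr P k i (M - r)) := by
  simp only [tinner, cauchyMul, texp]
  conv_lhs => simp only [Finset.mul_sum]
  rw [Finset.sum_comm]
  rw [← Fin.sum_univ_eq_sum_range (fun r => ((r.factorial : ℝ))⁻¹ *
      (∏ p ∈ Finset.range r, ∑ b, u (p + 1) b * fattr i b) *
      ∑ fidx : Fin (M - r) → Fin d,
        (∏ p : Fin (M - r), u (M - (M - r) + 1 + p.val) (fidx p)) *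
        PhiHat fattr P k i (M - r) fidx) (M+1)]
  refine Finset.sum_congr rfl fun r _ => ?_
  have hr : r.val ≤ M := Nat.lt_succ_iff.mp r.isLt
  rw [Nat.sub_sub_self hr]
  exact key d M r.val (M - r.val) (by omega) (fattr i) u (PhiHat fattr P k i (M - r.val))
end

section
/- Let F ∈ M_n(H) be the diagonal matrix with F_{i,i} = φ(f(i)) and let v_k = P̃^k 𝟙_H be the solution of the hypo-elliptic diffusion. Then the i-th component of F·v_k equals E[φ(δ_0 L)·φ(δ_1 L)⋯φ(δ_k L) | B_0 = i], where δ_0 L = f(B_0) and δ_q L = f(B_q) − f(B_{q-1}); that is, left-multiplying by F prepends the lift of the starting attribute to the random-walk feature expectation. -/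
lemma key_s19 (n d : ℕ)
    (H : Type*) [Ring H] [Algebra ℝ H]
    (Adj : Fin n → Fin n → Prop) [DecidableRel Adj]
    (f : Fin n → Fin d → ℝ) (φ : (Fin d → ℝ) → H)
    (Pt : Matrix (Fin n) (Fin n) H)
    (hPt : ∀ i j, Pt i j =
      if Adj i j then ((degree n Adj i : ℝ))⁻¹ • φ (f j - f i) else 0)
    (P : Matrix (Fin n) (Fin n) ℝ)
    (hP : ∀ i j, P i j = if Adj i j then ((degree n Adj i : ℝ))⁻¹ else 0) :
    ∀ (k : ℕ) (i : Fin n),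
    ((Pt ^ k).mulVec (fun _ => (1 : H))) i =
      ∑ w : Fin (k+1) → Fin n,
        (if w 0 = i then ∏ q : Fin k, P (w q.castSucc) (w q.succ) else 0) •
          (List.ofFn fun q : Fin k =>
            φ (f (w q.succ) - f (w q.castSucc))).prod := by
  have hPtP : ∀ i j, Pt i j = P i j • φ (f j - f i) := by
    intro i j
    rw [hPt, hP]
    split <;> simp
  intro k
  induction k with
  | zero =>
      intro i
      rw [pow_zero, Matrix.one_mulVec]
      rw [← Fintype.sum_equiv (Equiv.funUnique (Fin 1) (Fin n)).symm
        (fun j => (if j = i then (1:ℝ) else 0) • (1 : H)) _ (fun j => by simp)]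
      simp
  | succ k ih =>
      intro i
      rw [pow_succ', ← Matrix.mulVec_mulVec]
      -- LHS: ∑ j, Pt i j * IH j
      have lhs_eq : (Pt.mulVec ((Pt ^ k).mulVec fun _ => (1:H))) i =
          ∑ w : Fin (k+1) → Fin n,
            (P i (w 0) * ∏ q : Fin k, P (w q.castSucc) (w q.succ)) •
              (φ (f (w 0) - f i) *
                (List.ofFn fun q : Fin k =>
                  φ (f (w q.succ) - f (w q.castSucc))).prod) := by
        rw [Matrix.mulVec, dotProduct]
        calc ∑ j, Pt i j * ((Pt ^ k).mulVec fun _ => (1:H)) j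
            = ∑ j, ∑ w : Fin (k+1) → Fin n,
                Pt i j * ((if w 0 = j then ∏ q : Fin k, P (w q.castSucc) (w q.succ) else 0) •
                  (List.ofFn fun q : Fin k =>
                    φ (f (w q.succ) - f (w q.castSucc))).prod) := by
              simp_rw [ih, Finset.mul_sum]
          _ = ∑ w : Fin (k+1) → Fin n, ∑ j,
                (if w 0 = j then
                  Pt i j * ((∏ q : Fin k, P (w q.castSucc) (w q.succ)) •
                    (List.ofFn fun q : Fin k =>
                      φ (f (w q.succ) - f (w q.castSucc))).prod) else 0) := by
              rw [Finset.sum_comm]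
              refine Finset.sum_congr rfl fun w _ => Finset.sum_congr rfl fun j _ => ?_
              split <;> simp
          _ = _ := by
              refine Finset.sum_congr rfl fun w _ => ?_
              rw [Finset.sum_ite_eq Finset.univ (w 0)]
              simp [hPtP, smul_mul_assoc, mul_smul_comm, smul_smul, mul_comm]
      rw [lhs_eq]
      symm
      rw [← Equiv.sum_comp (Fin.consEquiv (fun _ => Fin n)), Fintype.sum_prod_type]
      have step : ∀ (j : Fin n) (w : Fin (k+1) → Fin n),
          ((if (Fin.consEquiv (fun _ => Fin n)) (j, w) 0 = i then
              ∏ q : Fin (k+1), P ((Fin.consEquiv (fun _ => Fin n)) (j, w) q.castSucc)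
                ((Fin.consEquiv (fun _ => Fin n)) (j, w) q.succ) else 0) •
            (List.ofFn fun q : Fin (k+1) =>
              φ (f ((Fin.consEquiv (fun _ => Fin n)) (j, w) q.succ) -
                 f ((Fin.consEquiv (fun _ => Fin n)) (j, w) q.castSucc))).prod)
          = if j = i then
              (P j (w 0) * ∏ q : Fin k, P (w q.castSucc) (w q.succ)) •
                (φ (f (w 0) - f j) *
                  (List.ofFn fun q : Fin k =>
                    φ (f (w q.succ) - f (w q.castSucc))).prod) else 0 := by
        intro j w
        simp only [Fin.consEquiv_apply, Fin.cons_zero]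
        by_cases h : j = i
        · rw [if_pos h, if_pos h]
          have h1 : (∏ q : Fin (k+1), P ((Fin.cons j w : Fin (k+2) → Fin n) q.castSucc)
              ((Fin.cons j w : Fin (k+2) → Fin n) q.succ))
              = P j (w 0) * ∏ q : Fin k, P (w q.castSucc) (w q.succ) := by
            simp [Fin.prod_univ_succ, ← Fin.succ_castSucc]
          have h2 : (List.ofFn fun q : Fin (k+1) =>
              φ (f ((Fin.cons j w : Fin (k+2) → Fin n) q.succ) -
                 f ((Fin.cons j w : Fin (k+2) → Fin n) q.castSucc))).prod
              = φ (f (w 0) - f j) *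
                (List.ofFn fun q : Fin k => φ (f (w q.succ) - f (w q.castSucc))).prod := by
            simp [List.ofFn_succ, ← Fin.succ_castSucc]
          rw [h1, h2]
        · rw [if_neg h, if_neg h, zero_smul]
      simp_rw [step]
      rw [Finset.sum_comm]
      simp only [Finset.sum_ite_eq', Finset.mem_univ, if_true]

/-- Prepending the starting attribute: with `F` the diagonal matrix with
`F_{i,i} = φ(f i)` and `v_k = P̃^k 𝟙_H` the solution of the hypo-elliptic diffusion,
the `i`-th component of `F·v_k` equals
`E[φ(δ₀L)·φ(δ₁L)⋯φ(δ_kL) | B₀ = i]`, where `δ₀L = f(B₀)`: the probability-weighted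
sum over trajectories started at `i` of `φ(f i)` times the ordered product of the
lifted increments. -/
theorem prepend_start_attribute (n d k : ℕ) (hk : 1 ≤ k)
    (H : Type*) [Ring H] [Algebra ℝ H]
    (Adj : Fin n → Fin n → Prop) [DecidableRel Adj] (hsymm : Symmetric Adj)
    (hdeg : ∀ i, 0 < degree n Adj i)
    (f : Fin n → Fin d → ℝ) (φ : (Fin d → ℝ) → H)
    (Pt : Matrix (Fin n) (Fin n) H)
    (hPt : ∀ i j, Pt i j =
      if Adj i j then ((degree n Adj i : ℝ))⁻¹ • φ (f j - f i) else 0)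
    (P : Matrix (Fin n) (Fin n) ℝ)
    (hP : ∀ i j, P i j = if Adj i j then ((degree n Adj i : ℝ))⁻¹ else 0)
    (F : Matrix (Fin n) (Fin n) H)
    (hFdiag : ∀ i, F i i = φ (f i)) (hFoff : ∀ i j, i ≠ j → F i j = 0)
    (i : Fin n) :
    ((F * Pt ^ k).mulVec (fun _ => (1 : H))) i =
      ∑ w : Fin (k+1) → Fin n,
        (if w 0 = i then ∏ q : Fin k, P (w q.castSucc) (w q.succ) else 0) •
          (φ (f i) *
            (List.ofFn fun q : Fin k =>
              φ (f (w q.succ) - f (w q.castSucc))).prod) := by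
  have hL := key_s19 n d H Adj f φ Pt hPt P hP k i
  calc ((F * Pt ^ k).mulVec (fun _ => (1 : H))) i
      = ∑ j, F i j * ((Pt ^ k).mulVec fun _ => (1:H)) j := by
        rw [← Matrix.mulVec_mulVec, Matrix.mulVec, dotProduct]
    _ = F i i * ((Pt ^ k).mulVec fun _ => (1:H)) i := by
        refine Finset.sum_eq_single i (fun j _ hj => ?_) (by simp)
        rw [hFoff i j (Ne.symm hj), zero_mul]
    _ = _ := by
        rw [hFdiag, hL, Finset.mul_sum]
        exact Finset.sum_congr rfl fun w _ => mul_smul_comm _ _ _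
end
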